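/- For the strip map 𝓛(s,t) := Γ(s) + t·N_Θ(s), the induced metric is diagonal with Jacobian f: for almost every s ∈ ℝ and every t ∈ (−a,a), the partial derivatives satisfy ∂₁𝓛(s,t) = (1 − t·(k(s)·Θ(s)))·T(s) + t·(Θ₁'(s)N₁(s)+…+Θ_n'(s)N_n(s)) and ∂₂𝓛(s,t) = N_Θ(s); consequently ∂₁𝓛(s,t)·∂₂𝓛(s,t) = 0, |∂₂𝓛(s,t)| = 1, and |∂₁𝓛(s,t)|² = f(s,t)² = (1 − t·(k(s)·Θ(s)))² + t²|Θ'(s)|². -/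

import Mathlib

open MeasureTheory Real Set Filter

noncomputable section

/-- The geodesic-curvature scalar `k·Θ`. -/
def kdot (n : ℕ) (k Θ : ℝ → Fin n → ℝ) (s : ℝ) : ℝ := ∑ j, k s j * Θ s j

/-- `|Θ'(s)|²`. -/
def twistSq (n : ℕ) (Θ : ℝ → Fin n → ℝ) (s : ℝ) : ℝ :=
  ∑ j, (deriv (fun u => Θ u j) s) ^ 2

/-- The Jacobian `f(s,t) = √((1 - t k(s)·Θ(s))² + t² |Θ'(s)|²)`. -/
def fJac (n : ℕ) (k Θ : ℝ → Fin n → ℝ) (s t : ℝ) : ℝ :=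
  Real.sqrt ((1 - t * kdot n k Θ s) ^ 2 + t ^ 2 * twistSq n Θ s)

/-- The generic normal field `N_Θ = Θ₁N₁ + … + Θ_nN_n`. -/
def NTheta (n : ℕ) (N : Fin n → ℝ → EuclideanSpace ℝ (Fin (n + 1)))
    (Θ : ℝ → Fin n → ℝ) (s : ℝ) : EuclideanSpace ℝ (Fin (n + 1)) :=
  ∑ j, Θ s j • N j s

/-- The strip map `𝓛(s,t) = Γ(s) + t N_Θ(s)`. -/
def stripMap (n : ℕ) (Γ : ℝ → EuclideanSpace ℝ (Fin (n + 1)))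
    (N : Fin n → ℝ → EuclideanSpace ℝ (Fin (n + 1)))
    (Θ : ℝ → Fin n → ℝ) (s t : ℝ) : EuclideanSpace ℝ (Fin (n + 1)) :=
  Γ s + t • NTheta n N Θ s

/-- The induced metric of the strip map is diagonal with Jacobian `f`. -/
theorem stripMap_metric_diagonal
    (n : ℕ) (hn : 1 ≤ n) (a : ℝ) (ha : 0 < a)
    (Γ : ℝ → EuclideanSpace ℝ (Fin (n + 1)))
    (N : Fin n → ℝ → EuclideanSpace ℝ (Fin (n + 1)))
    (k Θ : ℝ → Fin n → ℝ)
    (hΓ : Differentiable ℝ Γ)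
    (hT : LocallyLipschitz (deriv Γ))
    (hTunit : ∀ s, ‖deriv Γ s‖ = 1)
    (hNlip : ∀ j, LocallyLipschitz (N j))
    (hON : ∀ s : ℝ, Orthonormal ℝ
      (Fin.cons (deriv Γ s) (fun j => N j s) : Fin (n + 1) → EuclideanSpace ℝ (Fin (n + 1))))
    (hkm : ∀ j, Measurable fun s => k s j)
    (hkb : ∀ r : ℝ, ∃ C : ℝ, ∀ s : ℝ, |s| ≤ r → ∀ j, |k s j| ≤ C)
    (hΘlip : ∀ j, ∃ L : NNReal, LipschitzWith L fun s => Θ s j)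
    (hΘunit : ∀ s, ∑ j, Θ s j ^ 2 = 1)
    (hode : ∀ᵐ s ∂(volume : Measure ℝ),
      HasDerivAt (deriv Γ) (∑ j, k s j • N j s) s ∧
        ∀ j, HasDerivAt (N j) ((-k s j) • deriv Γ s) s) :
    ∀ᵐ s ∂(volume : Measure ℝ), ∀ t ∈ Ioo (-a) a,
      HasDerivAt (fun u => stripMap n Γ N Θ u t)
        ((1 - t * kdot n k Θ s) • deriv Γ s
          + t • ∑ j, deriv (fun u => Θ u j) s • N j s) s ∧
      HasDerivAt (fun v => stripMap n Γ N Θ s v) (NTheta n N Θ s) t ∧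
      inner ℝ ((1 - t * kdot n k Θ s) • deriv Γ s
          + t • ∑ j, deriv (fun u => Θ u j) s • N j s) (NTheta n N Θ s) = (0 : ℝ) ∧
      ‖NTheta n N Θ s‖ = 1 ∧
      ‖(1 - t * kdot n k Θ s) • deriv Γ s
          + t • ∑ j, deriv (fun u => Θ u j) s • N j s‖ ^ 2 = fJac n k Θ s t ^ 2 := by
  classical
  have hΘall : ∀ᵐ s ∂(volume : Measure ℝ), ∀ j, DifferentiableAt ℝ (fun u => Θ u j) s := by
    rw [MeasureTheory.ae_all_iff]
    intro j
    obtain ⟨L, hL⟩ := hΘlip j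
    exact hL.ae_differentiableAt
  filter_upwards [hode, hΘall] with s hs hΘs
  intro t ht
  obtain ⟨hT', hN'⟩ := hs
  set T := deriv Γ with hTdef
  have hΘd : ∀ j, HasDerivAt (fun u => Θ u j) (deriv (fun u => Θ u j) s) s :=
    fun j => (hΘs j).hasDerivAt
  -- inner product facts
  have hONs := (orthonormal_iff_ite.mp (hON s))
  have hTN : ∀ j, inner ℝ (T s) (N j s) = (0 : ℝ) := by
    intro j
    have := hONs 0 j.succ
    simpa [(Fin.succ_ne_zero j).symm] using this
  have hNN : ∀ i j, inner ℝ (N i s) (N j s) = (if i = j then (1:ℝ) else 0) := by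
    intro i j
    have := hONs i.succ j.succ
    simpa [Fin.succ_inj] using this
  have hTT : inner ℝ (T s) (T s) = (1 : ℝ) := by
    have := hONs 0 0
    simpa using this
  -- orthogonality of Θ and Θ'
  have hΘΘ' : ∑ j, deriv (fun u => Θ u j) s * Θ s j = 0 := by
    have h1 : HasDerivAt (fun u => ∑ j, Θ u j ^ 2)
        (∑ j, 2 * Θ s j * deriv (fun u => Θ u j) s) s := by
      apply HasDerivAt.fun_sum
      intro j _
      have := (hΘd j).fun_pow 2
      simpa [mul_comm, mul_assoc] using this
    have h2 : HasDerivAt (fun u => ∑ j, Θ u j ^ 2) 0 s := by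
      have : (fun u => ∑ j, Θ u j ^ 2) = fun _ => (1:ℝ) := funext hΘunit
      rw [this]; exact hasDerivAt_const s 1
    have h3 := h1.unique h2
    have : (2:ℝ) * ∑ j, deriv (fun u => Θ u j) s * Θ s j = 0 := by
      rw [Finset.mul_sum]
      rw [← h3]
      apply Finset.sum_congr rfl
      intro j _; ring
    linarith
  -- Part 1: s-derivative
  have hpart1 : HasDerivAt (fun u => stripMap n Γ N Θ u t)
      ((1 - t * kdot n k Θ s) • T s
        + t • ∑ j, deriv (fun u => Θ u j) s • N j s) s := by
    have hsum : HasDerivAt (fun u => NTheta n N Θ u)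
        (∑ j, (Θ s j • ((-k s j) • T s) + deriv (fun u => Θ u j) s • N j s)) s := by
      unfold NTheta
      apply HasDerivAt.fun_sum
      intro j _
      exact (hΘd j).smul (hN' j)
    have hL : HasDerivAt (fun u => stripMap n Γ N Θ u t)
        (T s + t • ∑ j, (Θ s j • ((-k s j) • T s) + deriv (fun u => Θ u j) s • N j s)) s := by
      unfold stripMap
      exact ((hΓ s).hasDerivAt).add (hsum.const_smul t)
    convert hL using 1
    have key : ∑ j, Θ s j • ((-k s j) • T s) = (-(kdot n k Θ s)) • T s := by
      have e1 : ∀ j ∈ Finset.univ, Θ s j • ((-k s j) • T s) = (Θ s j * (-k s j)) • T s :=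
        fun j _ => by rw [smul_smul]
      rw [Finset.sum_congr rfl e1, ← Finset.sum_smul]
      congr 1
      unfold kdot
      rw [← Finset.sum_neg_distrib]
      exact Finset.sum_congr rfl fun j _ => by ring
    rw [Finset.sum_add_distrib, smul_add, key, smul_smul]
    rw [sub_smul, one_smul, mul_neg, neg_smul]
    abel
  refine ⟨hpart1, ?_, ?_, ?_, ?_⟩
  · -- Part 2: t-derivative
    unfold stripMap
    have : HasDerivAt (fun v : ℝ => v • NTheta n N Θ s) ((1:ℝ) • NTheta n N Θ s) t :=
      (hasDerivAt_id t).smul_const _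
    simpa using (this.const_add (Γ s))
  · -- Part 3: orthogonality
    rw [inner_add_left, inner_smul_left, inner_smul_left]
    have e1 : inner ℝ (T s) (NTheta n N Θ s) = (0:ℝ) := by
      unfold NTheta
      rw [inner_sum]
      simp [inner_smul_right, hTN]
    have e2 : inner ℝ (∑ j, deriv (fun u => Θ u j) s • N j s) (NTheta n N Θ s) = (0:ℝ) := by
      unfold NTheta
      rw [sum_inner]
      rw [← hΘΘ']
      apply Finset.sum_congr rfl
      intro i _
      rw [inner_smul_left, inner_sum]
      simp only [inner_smul_right, hNN, RCLike.inner_apply, conj_trivial, mul_ite,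
        mul_one, mul_zero, Finset.sum_ite_eq, Finset.mem_univ, if_true]
    rw [e1, e2]
    ring
  · -- Part 4: norm of NTheta
    have hsq : inner ℝ (NTheta n N Θ s) (NTheta n N Θ s) = (1:ℝ) := by
      unfold NTheta
      rw [sum_inner]
      rw [← hΘunit s]
      apply Finset.sum_congr rfl
      intro i _
      rw [inner_smul_left, inner_sum]
      simp only [inner_smul_right, hNN, RCLike.inner_apply, conj_trivial, mul_ite,
        mul_one, mul_zero, Finset.sum_ite_eq, Finset.mem_univ, if_true]
      ring
    have : ‖NTheta n N Θ s‖ ^ 2 = 1 := by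
      rw [← real_inner_self_eq_norm_sq, hsq]
    nlinarith [norm_nonneg (NTheta n N Θ s)]
  · -- Part 5: norm squared equals fJac squared
    have hnn : (0:ℝ) ≤ (1 - t * kdot n k Θ s) ^ 2 + t ^ 2 * twistSq n Θ s := by
      have : (0:ℝ) ≤ twistSq n Θ s := Finset.sum_nonneg fun j _ => sq_nonneg _
      positivity
    rw [fJac, Real.sq_sqrt hnn]
    rw [← real_inner_self_eq_norm_sq]
    have eTW : inner ℝ (T s) (∑ j, deriv (fun u => Θ u j) s • N j s) = (0:ℝ) := by
      rw [inner_sum]; simp [inner_smul_right, hTN]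
    have eWT : inner ℝ (∑ j, deriv (fun u => Θ u j) s • N j s) (T s) = (0:ℝ) := by
      rw [sum_inner]
      simp only [inner_smul_left, conj_trivial]
      rw [Finset.sum_eq_zero]
      intro j _
      rw [real_inner_comm, hTN j]; ring
    have eWW : inner ℝ (∑ j, deriv (fun u => Θ u j) s • N j s)
        (∑ j, deriv (fun u => Θ u j) s • N j s) = twistSq n Θ s := by
      rw [sum_inner]
      unfold twistSq
      apply Finset.sum_congr rfl
      intro i _
      rw [inner_smul_left, inner_sum]
      simp only [inner_smul_right, hNN, RCLike.inner_apply, conj_trivial, mul_ite,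
        mul_one, mul_zero, Finset.sum_ite_eq, Finset.mem_univ, if_true]
      ring
    rw [inner_add_left, inner_add_right, inner_add_right]
    simp only [inner_smul_left, inner_smul_right, conj_trivial]
    rw [hTT, eTW, eWT, eWW]
    ring
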